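/- Let x̄ ∈ {0,1}^{C(n,2)} be the edge vector of a graph G(x̄) and let m = 1ᵀx̄. Define c ∈ ℝ^{C(n,2)} by c_{ij} = 1 if x̄_{ij} = 1 and c_{ij} = −1 otherwise, and fix 0 < d ≤ 1/2. Then the maximum of cᵀx + d·w over (x,w) ∈ PM_n equals m + d if G(x̄) has a perfect matching, and equals m otherwise; in both cases the maximizer is unique (namely (x̄, w_{x̄})). -/
import Mathlib


open scoped Classical

/-- Edges of the complete graph on `n` vertices: pairs `(i, j)` with `i < j`. -/
abbrev Edg (n : ℕ) := {p : Fin n × Fin n // p.1 < p.2}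

/-- 0/1 real value of a boolean. -/
def bval (b : Bool) : ℝ := if b then 1 else 0

/-- Graph on `n` vertices with edge incidence vector `x`. -/
def graphOf {n : ℕ} (x : Edg n → Bool) : SimpleGraph (Fin n) :=
  SimpleGraph.fromEdgeSet {s | ∃ e : Edg n, x e = true ∧ s = s(e.1.1, e.1.2)}

/-- `G(x)` has a perfect matching. -/
def hasPM {n : ℕ} (x : Edg n → Bool) : Prop :=
  ∃ M : (graphOf x).Subgraph, M.IsPerfectMatching

/-- The point `(x, w_x)` of the perfect matching polytope `PM_n`. -/
noncomputable def pmPt {n : ℕ} (x : Edg n → Bool) : (Edg n → ℝ) × ℝ :=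
  (fun e => bval (x e), if hasPM x then 1 else 0)

/-- The perfect matching polytope `PM_n`. -/
noncomputable def PMpoly (n : ℕ) : Set ((Edg n → ℝ) × ℝ) :=
  convexHull ℝ (Set.range (pmPt (n := n)))

noncomputable def Fobj {n : ℕ} (xbar : Edg n → Bool) (d : ℝ) : ((Edg n → ℝ) × ℝ) →ₗ[ℝ] ℝ where
  toFun p := (∑ e : Edg n, (if xbar e then (1:ℝ) else -1) * p.1 e) + d * p.2
  map_add' p q := by
    simp [mul_add, Finset.sum_add_distrib]; ring
  map_smul' c p := by
    simp only [Prod.smul_fst, Prod.smul_snd, Pi.smul_apply, smul_eq_mul, RingHom.id_apply,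
      Finset.mul_sum, mul_add]
    congr 1
    · apply Finset.sum_congr rfl; intro e _; ring
    · ring

lemma Fobj_pmPt {n : ℕ} (xbar x : Edg n → Bool) (d : ℝ) :
    Fobj xbar d (pmPt x) =
      ((∑ e : Edg n, bval (xbar e)) - ∑ e : Edg n, (if x e = xbar e then (0:ℝ) else 1))
        + d * (if hasPM x then 1 else 0) := by
  show (∑ e : Edg n, (if xbar e then (1:ℝ) else -1) * bval (x e)) + _ = _
  rw [← Finset.sum_sub_distrib]
  congr 1
  apply Finset.sum_congr rfl
  intro e _
  cases hx : x e <;> cases hb : xbar e <;> simp [bval, hx, hb]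

lemma vertex_lt {n : ℕ} (xbar x : Edg n → Bool) (d : ℝ) (hd0 : 0 < d) (hd1 : d ≤ 1/2)
    (hne : x ≠ xbar) : Fobj xbar d (pmPt x) < Fobj xbar d (pmPt xbar) := by
  rw [Fobj_pmPt, Fobj_pmPt]
  have h1 : (∑ e : Edg n, (if xbar e = xbar e then (0:ℝ) else 1)) = 0 := by simp
  rw [h1]
  have h2 : (1:ℝ) ≤ ∑ e : Edg n, (if x e = xbar e then (0:ℝ) else 1) := by
    obtain ⟨e0, he0⟩ := Function.ne_iff.mp hne
    calc (1:ℝ) = (if x e0 = xbar e0 then (0:ℝ) else 1) := by simp [he0]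
      _ ≤ _ := Finset.single_le_sum (f := fun e => if x e = xbar e then (0:ℝ) else 1)
          (fun e _ => by positivity) (Finset.mem_univ e0)
  have h3 : d * (if hasPM x then (1:ℝ) else 0) ≤ d := by
    split <;> nlinarith
  have h4 : 0 ≤ d * (if hasPM xbar then (1:ℝ) else 0) := by positivity
  linarith

theorem pm_lp_unique_optimum (n : ℕ) (hn : Even n) (hpos : 0 < n)
    (xbar : Edg n → Bool) (d : ℝ) (hd0 : 0 < d) (hd1 : d ≤ 1 / 2) :
    pmPt xbar ∈ PMpoly n ∧
    (∑ e : Edg n, (if xbar e then (1 : ℝ) else -1) * (pmPt xbar).1 e) + d * (pmPt xbar).2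
      = (∑ e : Edg n, bval (xbar e)) + (if hasPM xbar then d else 0) ∧
    ∀ p ∈ PMpoly n,
      (∑ e : Edg n, (if xbar e then (1 : ℝ) else -1) * p.1 e) + d * p.2
          ≤ (∑ e : Edg n, bval (xbar e)) + (if hasPM xbar then d else 0) ∧
      ((∑ e : Edg n, (if xbar e then (1 : ℝ) else -1) * p.1 e) + d * p.2
          = (∑ e : Edg n, bval (xbar e)) + (if hasPM xbar then d else 0) → p = pmPt xbar) := by
  -- value at the top vertex
  have hval : ∀ p : (Edg n → ℝ) × ℝ,
      (∑ e : Edg n, (if xbar e then (1 : ℝ) else -1) * p.1 e) + d * p.2 = Fobj xbar d p :=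
    fun p => rfl
  have hM : Fobj xbar d (pmPt xbar)
      = (∑ e : Edg n, bval (xbar e)) + (if hasPM xbar then d else 0) := by
    rw [Fobj_pmPt]
    simp only [eq_self_iff_true, if_true, Finset.sum_const_zero]
    split <;> ring
  set M : ℝ := (∑ e : Edg n, bval (xbar e)) + (if hasPM xbar then d else 0) with hMdef
  -- bounds on vertices
  have hle : ∀ y ∈ Set.range (pmPt (n := n)), Fobj xbar d y ≤ M := by
    rintro y ⟨x, rfl⟩
    rw [← hM]
    rcases eq_or_ne x xbar with rfl | hne
    · exact le_refl _
    · exact (vertex_lt xbar x d hd0 hd1 hne).le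
  have hlt : ∀ y ∈ Set.range (pmPt (n := n)), y ≠ pmPt xbar → Fobj xbar d y < M := by
    rintro y ⟨x, rfl⟩ hne
    rw [← hM]
    exact vertex_lt xbar x d hd0 hd1 (fun h => hne (by rw [h]))
  refine ⟨subset_convexHull ℝ _ ⟨xbar, rfl⟩, by rw [hval]; exact hM, ?_⟩
  intro p hp
  -- express p as convex combination
  have hfin : Set.range (pmPt (n := n)) = ↑(Finset.univ.image (pmPt (n := n))) := by
    simp
  rw [PMpoly, hfin, Finset.convexHull_eq] at hp
  obtain ⟨w, hw0, hw1, hwp⟩ := hp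
  set s := Finset.univ.image (pmPt (n := n)) with hs
  have hcm : (∑ y ∈ s, w y • y) = p := by
    rw [← hwp, Finset.centerMass_eq_of_sum_1 _ _ hw1]
    rfl
  have hFp : Fobj xbar d p = ∑ y ∈ s, w y * Fobj xbar d y := by
    rw [← hcm, map_sum]
    simp
  have hyle : ∀ y ∈ s, Fobj xbar d y ≤ M := fun y hy => by
    apply hle
    simp only [hs, Finset.mem_image] at hy
    obtain ⟨x, _, rfl⟩ := hy
    exact ⟨x, rfl⟩
  have hbound : Fobj xbar d p ≤ M := by
    rw [hFp]
    calc (∑ y ∈ s, w y * Fobj xbar d y) ≤ ∑ y ∈ s, w y * M :=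
        Finset.sum_le_sum (fun y hy => mul_le_mul_of_nonneg_left (hyle y hy) (hw0 y hy))
      _ = M := by rw [← Finset.sum_mul, hw1, one_mul]
  refine ⟨by rw [hval]; exact hbound, ?_⟩
  -- uniqueness
  intro heq
  rw [hval] at heq
  have hzero : ∀ y ∈ s, w y * (M - Fobj xbar d y) = 0 := by
    have hsum : (∑ y ∈ s, w y * (M - Fobj xbar d y)) = 0 := by
      have : (∑ y ∈ s, w y * (M - Fobj xbar d y))
          = (∑ y ∈ s, w y * M) - ∑ y ∈ s, w y * Fobj xbar d y := by
        rw [← Finset.sum_sub_distrib]; apply Finset.sum_congr rfl; intros; ring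
      rw [this, ← Finset.sum_mul, hw1, one_mul, ← hFp, heq]
      ring
    intro y hy
    exact (Finset.sum_eq_zero_iff_of_nonneg (fun y hy =>
      mul_nonneg (hw0 y hy) (by linarith [hyle y hy]))).mp hsum y hy
  have hwz : ∀ y ∈ s, y ≠ pmPt xbar → w y = 0 := by
    intro y hy hne
    have hylt : Fobj xbar d y < M := by
      apply hlt _ _ hne
      simp only [hs, Finset.mem_image] at hy
      obtain ⟨x, _, rfl⟩ := hy
      exact ⟨x, rfl⟩
    rcases mul_eq_zero.mp (hzero y hy) with h | h
    · exact h
    · exfalso; linarith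
  have hmem : pmPt xbar ∈ s := by
    simp only [hs, Finset.mem_image]
    exact ⟨xbar, Finset.mem_univ _, rfl⟩
  have hw1' : w (pmPt xbar) = 1 := by
    rw [← hw1, Finset.sum_eq_single (pmPt xbar) (fun y hy hne => hwz y hy hne) (fun h => absurd hmem h)]
  rw [← hcm, Finset.sum_eq_single (pmPt xbar)
      (fun y hy hne => by rw [hwz y hy hne, zero_smul]) (fun h => absurd hmem h), hw1', one_smul]
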